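/- Let T₁ = [[1, 6], [0, −1]] and T₂ = [[−1, 0], [6, 1]] act linearly on ℝ², let G be the subgroup of GL(2,ℤ) generated by T₁ and T₂, let A = {(x, y) ∈ ℝ² : x ≥ 0 and y ≥ 0}, and let M = {0} ∪ {a·(3 + 2√2, −1) + b·(−1, 3 + 2√2) : a, b ∈ ℝ, a > 0, b > 0}. Then the union over all g ∈ G of the image g(A) equals M. -/
import Mathlib


/-- `T₁ = [[1,6],[0,-1]]` as an element of `GL(2,ℤ)` (it is its own inverse). -/
def T₁ : Matrix.GeneralLinearGroup (Fin 2) ℤ :=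
  ⟨!![1, 6; 0, -1], !![1, 6; 0, -1], by decide, by decide⟩

/-- `T₂ = [[-1,0],[6,1]]` as an element of `GL(2,ℤ)` (it is its own inverse). -/
def T₂ : Matrix.GeneralLinearGroup (Fin 2) ℤ :=
  ⟨!![-1, 0; 6, 1], !![-1, 0; 6, 1], by decide, by decide⟩

namespace OrbitAux

/-- The linear action of `g ∈ GL(2,ℤ)` on `ℝ²`. -/
noncomputable def act (g : Matrix.GeneralLinearGroup (Fin 2) ℤ) (v : Fin 2 → ℝ) : Fin 2 → ℝ :=
  ((g : Matrix (Fin 2) (Fin 2) ℤ).map (Int.cast : ℤ → ℝ)).mulVec v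

/-- The first quadrant. -/
def Aset : Set (Fin 2 → ℝ) := {v | 0 ≤ v 0 ∧ 0 ≤ v 1}

noncomputable def rp : Fin 2 → ℝ := ![3 + 2 * Real.sqrt 2, -1]
noncomputable def rm : Fin 2 → ℝ := ![-1, 3 + 2 * Real.sqrt 2]

/-- The target cone. -/
noncomputable def Mset : Set (Fin 2 → ℝ) :=
  {0} ∪ {v | ∃ a b : ℝ, 0 < a ∧ 0 < b ∧ v = a • rp + b • rm}

/-- The orbit of the quadrant. -/
noncomputable def U : Set (Fin 2 → ℝ) :=
  ⋃ g ∈ Subgroup.closure {T₁, T₂}, act g '' Aset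

lemma h2 : Real.sqrt 2 * Real.sqrt 2 = 2 := Real.mul_self_sqrt (by norm_num)

lemma sqrt2_gt_one : 1 < Real.sqrt 2 := by
  nlinarith [h2, Real.sqrt_nonneg 2]

lemma sqrt2_lt : Real.sqrt 2 < 3/2 := by
  nlinarith [h2, Real.sqrt_nonneg 2]

lemma mul_lam : (3 + 2 * Real.sqrt 2) * (3 - 2 * Real.sqrt 2) = 1 := by
  linear_combination (-4 : ℝ) * h2

lemma mulVec2 (A : Matrix (Fin 2) (Fin 2) ℝ) (v : Fin 2 → ℝ) :
    A.mulVec v = ![A 0 0 * v 0 + A 0 1 * v 1, A 1 0 * v 0 + A 1 1 * v 1] := by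
  funext i; fin_cases i <;>
    simp [Matrix.mulVec, dotProduct, Fin.sum_univ_two]

lemma act_mul (g h : Matrix.GeneralLinearGroup (Fin 2) ℤ) (v : Fin 2 → ℝ) :
    act (g * h) v = act g (act h v) := by
  simp only [act, Units.val_mul]
  rw [show (Int.cast : ℤ → ℝ) = ⇑(Int.castRingHom ℝ) from rfl, Matrix.map_mul,
    Matrix.mulVec_mulVec]

lemma act_one (v : Fin 2 → ℝ) : act 1 v = v := by
  simp only [act, Units.val_one]
  rw [show (Int.cast : ℤ → ℝ) = ⇑(Int.castRingHom ℝ) from rfl,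
    Matrix.map_one _ (by simp) (by simp), Matrix.one_mulVec]

lemma act_zero (g : Matrix.GeneralLinearGroup (Fin 2) ℤ) : act g 0 = 0 :=
  Matrix.mulVec_zero _

lemma act_T₁ (v : Fin 2 → ℝ) : act T₁ v = ![v 0 + 6 * v 1, -(v 1)] := by
  rw [act, mulVec2]
  norm_num [T₁, Matrix.map_apply]

lemma act_T₂ (v : Fin 2 → ℝ) : act T₂ v = ![-(v 0), 6 * v 0 + v 1] := by
  rw [act, mulVec2]
  norm_num [T₂, Matrix.map_apply]

lemma T1_sq : T₁ * T₁ = 1 := Units.ext (by decide)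
lemma T2_sq : T₂ * T₂ = 1 := Units.ext (by decide)

lemma T1_mem : T₁ ∈ Subgroup.closure {T₁, T₂} :=
  Subgroup.subset_closure (by simp)

lemma T2_mem : T₂ ∈ Subgroup.closure {T₁, T₂} :=
  Subgroup.subset_closure (by simp)

lemma coord0 (a b : ℝ) : (a • rp + b • rm) 0 = a * (3 + 2 * Real.sqrt 2) - b := by
  simp [rp, rm]; try ring

lemma coord1 (a b : ℝ) : (a • rp + b • rm) 1 = -a + b * (3 + 2 * Real.sqrt 2) := by
  simp [rp, rm]; try ring

lemma T1_coords (a b : ℝ) :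
    act T₁ (a • rp + b • rm)
      = ((3 + 2 * Real.sqrt 2) * b) • rp + ((3 - 2 * Real.sqrt 2) * a) • rm := by
  rw [act_T₁]
  funext i; fin_cases i <;> simp [rp, rm] <;> ring_nf <;>
    rw [Real.sq_sqrt (by norm_num : (0:ℝ) ≤ 2)] <;> ring

lemma T2_coords (a b : ℝ) :
    act T₂ (a • rp + b • rm)
      = ((3 - 2 * Real.sqrt 2) * b) • rp + ((3 + 2 * Real.sqrt 2) * a) • rm := by
  rw [act_T₂]
  funext i; fin_cases i <;> simp [rp, rm] <;> ring_nf <;>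
    rw [Real.sq_sqrt (by norm_num : (0:ℝ) ≤ 2)] <;> ring

/-- `T₁` preserves the cone `Mset`. -/
lemma T1_Mset_subset : act T₁ '' Mset ⊆ Mset := by
  rintro - ⟨w, hw, rfl⟩
  rcases hw with h0 | ⟨a, b, ha, hb, rfl⟩
  · rw [Set.mem_singleton_iff.mp h0, act_zero]; exact Or.inl rfl
  · refine Or.inr ⟨(3 + 2 * Real.sqrt 2) * b, (3 - 2 * Real.sqrt 2) * a, ?_, ?_, ?_⟩
    · have := sqrt2_gt_one; positivity
    · have := sqrt2_lt; nlinarith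
    · exact T1_coords a b

lemma T2_Mset_subset : act T₂ '' Mset ⊆ Mset := by
  rintro - ⟨w, hw, rfl⟩
  rcases hw with h0 | ⟨a, b, ha, hb, rfl⟩
  · rw [Set.mem_singleton_iff.mp h0, act_zero]; exact Or.inl rfl
  · refine Or.inr ⟨(3 - 2 * Real.sqrt 2) * b, (3 + 2 * Real.sqrt 2) * a, ?_, ?_, ?_⟩
    · have := sqrt2_lt; nlinarith
    · have := sqrt2_gt_one; positivity
    · exact T2_coords a b

lemma acts_eq_Mset : ∀ g ∈ Subgroup.closure ({T₁, T₂} : Set _), act g '' Mset = Mset := by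
  intro g hg
  induction hg using Subgroup.closure_induction with
  | mem x hx =>
    rcases hx with rfl | rfl
    · refine subset_antisymm T1_Mset_subset ?_
      intro v hv
      refine ⟨act T₁ v, T1_Mset_subset ⟨v, hv, rfl⟩, ?_⟩
      rw [← act_mul, T1_sq, act_one]
    · refine subset_antisymm T2_Mset_subset ?_
      intro v hv
      refine ⟨act T₂ v, T2_Mset_subset ⟨v, hv, rfl⟩, ?_⟩
      rw [← act_mul, T2_sq, act_one]
  | one => ext v; simp [act_one]
  | mul x y hx hy ihx ihy =>
    rw [show act (x * y) '' Mset = act x '' (act y '' Mset) by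
      rw [← Set.image_comp]; exact Set.image_congr fun v _ => act_mul x y v, ihy, ihx]
  | inv x hx ih =>
    have cancel : ∀ u : Fin 2 → ℝ, act x⁻¹ (act x u) = u := fun u => by
      rw [← act_mul, inv_mul_cancel, act_one]
    ext v
    constructor
    · rintro ⟨w, hw, rfl⟩
      rw [← ih] at hw
      obtain ⟨u, hu, rfl⟩ := hw
      rwa [cancel]
    · intro hv
      refine ⟨act x v, ?_, cancel v⟩
      rw [← ih]
      exact ⟨v, hv, rfl⟩

/-- Membership in `U` is preserved by acting with closure elements. -/
lemma act_mem_U {g : Matrix.GeneralLinearGroup (Fin 2) ℤ}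
    (hg : g ∈ Subgroup.closure ({T₁, T₂} : Set _)) {w : Fin 2 → ℝ} (hw : w ∈ U) :
    act g w ∈ U := by
  obtain ⟨S, ⟨h, rfl⟩, hS⟩ := hw
  obtain ⟨S', ⟨hh, rfl⟩, u, hu, rfl⟩ := hS
  refine Set.mem_biUnion (Subgroup.mul_mem _ hg hh) ⟨u, hu, ?_⟩
  exact act_mul g h u

lemma base_case {a b : ℝ} (ha : 0 < a) (hb : 0 < b)
    (h₁ : b ≤ (3 + 2 * Real.sqrt 2) * a) (h₂ : a ≤ (3 + 2 * Real.sqrt 2) * b) :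
    a • rp + b • rm ∈ U := by
  refine Set.mem_biUnion (Subgroup.one_mem _) ⟨a • rp + b • rm, ⟨?_, ?_⟩, act_one _⟩
  · rw [coord0]; linarith
  · rw [coord1]; linarith

lemma key : ∀ n : ℕ, ∀ a b : ℝ, 0 < a → 0 < b →
    b ≤ (3 + 2 * Real.sqrt 2) ^ (2 * n + 1) * a →
    a ≤ (3 + 2 * Real.sqrt 2) ^ (2 * n + 1) * b →
    a • rp + b • rm ∈ U := by
  intro n
  induction n with
  | zero =>
    intro a b ha hb h₁ h₂
    exact base_case ha hb (by rwa [pow_one] at h₁) (by rwa [pow_one] at h₂)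
  | succ n ih =>
    intro a b ha hb h₁ h₂
    set s := Real.sqrt 2 with hs
    have hμ : (1:ℝ) < 3 + 2 * s := by have := sqrt2_gt_one; linarith
    have hμ0 : (0:ℝ) < 3 + 2 * s := by linarith
    have hlam0 : (0:ℝ) < 3 - 2 * s := by have := sqrt2_lt; linarith
    have hml : (3 + 2 * s) * (3 - 2 * s) = 1 := mul_lam
    have hpow1 : (1:ℝ) ≤ (3 + 2 * s) ^ (2 * n) := one_le_pow₀ hμ.le
    rcases le_or_gt b ((3 + 2 * s) * a) with hc1 | hc1
    · rcases le_or_gt a ((3 + 2 * s) * b) with hc2 | hc2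
      · exact base_case ha hb hc1 hc2
      · -- a > (3+2s) b : pull back by T₁, preimage coords ((3+2s)b, (3-2s)a)
        set a' := (3 + 2 * s) * b with ha'
        set b' := (3 - 2 * s) * a with hb'
        have ha'0 : 0 < a' := by positivity
        have hb'0 : 0 < b' := by positivity
        have k1 : b' ≤ (3 + 2 * s) ^ (2 * n + 1) * a' := by
          rw [hb', ha']
          have e : (3 + 2 * s) ^ (2 * n + 1) * ((3 + 2 * s) * b)
              = (3 + 2 * s) ^ (2 * (n + 1)) * b := by ring
          rw [e]
          have step : (3 - 2 * s) * a ≤ (3 - 2 * s) * ((3 + 2 * s) ^ (2 * (n + 1) + 1) * b) :=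
            mul_le_mul_of_nonneg_left h₂ hlam0.le
          have e2 : (3 - 2 * s) * ((3 + 2 * s) ^ (2 * (n + 1) + 1) * b)
              = (3 + 2 * s) * (3 - 2 * s) * ((3 + 2 * s) ^ (2 * (n + 1)) * b) := by ring
          rw [e2, hml, one_mul] at step
          exact step
        have k2 : a' ≤ (3 + 2 * s) ^ (2 * n + 1) * b' := by
          rw [ha', hb']
          have e : (3 + 2 * s) ^ (2 * n + 1) * ((3 - 2 * s) * a)
              = (3 + 2 * s) * (3 - 2 * s) * ((3 + 2 * s) ^ (2 * n) * a) := by ring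
          rw [e, hml, one_mul]
          have h1a : 1 * a ≤ (3 + 2 * s) ^ (2 * n) * a :=
            mul_le_mul_of_nonneg_right hpow1 ha.le
          linarith
        have hmem := ih a' b' ha'0 hb'0 k1 k2
        have hv : a • rp + b • rm = act T₁ (a' • rp + b' • rm) := by
          rw [T1_coords, ha', hb']
          congr 1
          · congr 1; linear_combination (4 * a) * h2
          · congr 1; linear_combination (4 * b) * h2
        rw [hv]
        exact act_mem_U T1_mem hmem
    · -- b > (3+2s) a : pull back by T₂, preimage coords ((3-2s)b, (3+2s)a)
      set a' := (3 - 2 * s) * b with ha'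
      set b' := (3 + 2 * s) * a with hb'
      have ha'0 : 0 < a' := by positivity
      have hb'0 : 0 < b' := by positivity
      have k1 : b' ≤ (3 + 2 * s) ^ (2 * n + 1) * a' := by
        rw [hb', ha']
        have e : (3 + 2 * s) ^ (2 * n + 1) * ((3 - 2 * s) * b)
            = (3 + 2 * s) * (3 - 2 * s) * ((3 + 2 * s) ^ (2 * n) * b) := by ring
        rw [e, hml, one_mul]
        have h1b : 1 * b ≤ (3 + 2 * s) ^ (2 * n) * b :=
          mul_le_mul_of_nonneg_right hpow1 hb.le
        linarith
      have k2 : a' ≤ (3 + 2 * s) ^ (2 * n + 1) * b' := by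
        rw [ha', hb']
        have e : (3 + 2 * s) ^ (2 * n + 1) * ((3 + 2 * s) * a)
            = (3 + 2 * s) ^ (2 * (n + 1)) * a := by ring
        rw [e]
        have step : (3 - 2 * s) * b ≤ (3 - 2 * s) * ((3 + 2 * s) ^ (2 * (n + 1) + 1) * a) :=
          mul_le_mul_of_nonneg_left h₁ hlam0.le
        have e2 : (3 - 2 * s) * ((3 + 2 * s) ^ (2 * (n + 1) + 1) * a)
            = (3 + 2 * s) * (3 - 2 * s) * ((3 + 2 * s) ^ (2 * (n + 1)) * a) := by ring
        rw [e2, hml, one_mul] at step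
        exact step
      have hmem := ih a' b' ha'0 hb'0 k1 k2
      have hv : a • rp + b • rm = act T₂ (a' • rp + b' • rm) := by
        rw [T2_coords, ha', hb']
        congr 1
        · congr 1; linear_combination (4 * a) * h2
        · congr 1; linear_combination (4 * b) * h2
      rw [hv]
      exact act_mem_U T2_mem hmem

lemma quadrant_subset_Mset : Aset ⊆ Mset := by
  intro v ⟨h0, h1⟩
  by_cases hv : v = 0
  · exact Or.inl hv
  · have hne : v 0 ≠ 0 ∨ v 1 ≠ 0 := by
      by_contra h
      push_neg at h
      exact hv (funext fun i => by fin_cases i <;> simp [h.1, h.2])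
    set s := Real.sqrt 2 with hs
    have hs1 : 1 < s := sqrt2_gt_one
    have hD : (0:ℝ) < 16 + 12 * s := by linarith
    set a := ((3 + 2 * s) * v 0 + v 1) / (16 + 12 * s) with ha
    set b := (v 0 + (3 + 2 * s) * v 1) / (16 + 12 * s) with hb
    have hnum : 0 < (3 + 2 * s) * v 0 + v 1 ∧ 0 < v 0 + (3 + 2 * s) * v 1 := by
      rcases hne with h | h
      · have : 0 < v 0 := lt_of_le_of_ne h0 (Ne.symm h)
        constructor <;> nlinarith
      · have : 0 < v 1 := lt_of_le_of_ne h1 (Ne.symm h)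
        constructor <;> nlinarith
    refine Or.inr ⟨a, b, div_pos hnum.1 hD, div_pos hnum.2 hD, ?_⟩
    funext i
    fin_cases i <;> simp [rp, rm, ha, hb, ← hs] <;> field_simp <;> ring_nf <;>
      rw [Real.sq_sqrt (by norm_num : (0:ℝ) ≤ 2)] <;> ring

lemma U_eq_Mset : U = Mset := by
  apply subset_antisymm
  · intro v hv
    obtain ⟨S, ⟨g, rfl⟩, hS⟩ := hv
    obtain ⟨S', ⟨hg, rfl⟩, w, hw, rfl⟩ := hS
    rw [← acts_eq_Mset g hg]
    exact ⟨w, quadrant_subset_Mset hw, rfl⟩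
  · rintro v (rfl | ⟨a, b, ha, hb, rfl⟩)
    · exact Set.mem_biUnion (Subgroup.one_mem _)
        ⟨0, ⟨le_refl _, le_refl _⟩, act_one 0⟩
    · have hμ : (1:ℝ) < 3 + 2 * Real.sqrt 2 := by
        have := sqrt2_gt_one; linarith
      obtain ⟨n₁, hn₁⟩ := pow_unbounded_of_one_lt (b / a) hμ
      obtain ⟨n₂, hn₂⟩ := pow_unbounded_of_one_lt (a / b) hμ
      have h₁ : b ≤ (3 + 2 * Real.sqrt 2) ^ (2 * (n₁ + n₂) + 1) * a := by
        have hle : (3 + 2 * Real.sqrt 2) ^ n₁ ≤ (3 + 2 * Real.sqrt 2) ^ (2 * (n₁ + n₂) + 1) :=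
          pow_le_pow_right₀ hμ.le (by omega)
        have : b / a < (3 + 2 * Real.sqrt 2) ^ (2 * (n₁ + n₂) + 1) := lt_of_lt_of_le hn₁ hle
        rw [div_lt_iff₀ ha] at this
        linarith
      have h₂ : a ≤ (3 + 2 * Real.sqrt 2) ^ (2 * (n₁ + n₂) + 1) * b := by
        have hle : (3 + 2 * Real.sqrt 2) ^ n₂ ≤ (3 + 2 * Real.sqrt 2) ^ (2 * (n₁ + n₂) + 1) :=
          pow_le_pow_right₀ hμ.le (by omega)
        have : a / b < (3 + 2 * Real.sqrt 2) ^ (2 * (n₁ + n₂) + 1) := lt_of_lt_of_le hn₂ hle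
        rw [div_lt_iff₀ hb] at this
        linarith
      exact key (n₁ + n₂) a b ha hb h₁ h₂

end OrbitAux

/-- The union, over all `g` in the subgroup of `GL(2,ℤ)` generated by `T₁` and `T₂`,
of the images `g(A)` of the first quadrant `A` under the linear action on `ℝ²`
equals the open cone `M` spanned by `(3+2√2, -1)` and `(-1, 3+2√2)` together with `0`. -/
theorem orbit_of_nef_cone_eq :
    (⋃ g ∈ Subgroup.closure {T₁, T₂},
        (fun v : Fin 2 → ℝ =>
          ((g : Matrix (Fin 2) (Fin 2) ℤ).map (Int.cast : ℤ → ℝ)).mulVec v) ''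
          {v : Fin 2 → ℝ | 0 ≤ v 0 ∧ 0 ≤ v 1})
      = {0} ∪ {v : Fin 2 → ℝ | ∃ a b : ℝ, 0 < a ∧ 0 < b ∧
          v = a • ![3 + 2 * Real.sqrt 2, -1] + b • ![-1, 3 + 2 * Real.sqrt 2]} := by
  exact OrbitAux.U_eq_Mset
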